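/- The set ⟨S⟩_𝒞 generated by a subset S ⊆ ℤ_{>0} as a C-collection consists exactly of all numbers of the form k + Σ_{j=1}^r (β̄_{b_j} − β̄_{a_j}) + s, where r ≥ 0, s ∈ S_Γ ∪ {0}, k ∈ S, and k ≤ β̄_{a₁} < β̄_{b₁} ≤ β̄_{a₂} < β̄_{b₂} ≤ ... < β̄_{b_r}. -/
import Mathlib


/-- `T` is a `𝒞`-collection relative to the semigroup-with-zero `S₀ = S_Γ ∪ {0}` and the
minimal semigroup generators `bb 1 < ... < bb g`. -/
def IsCCollection (S₀ : Set ℕ) (g : ℕ) (bb : ℕ → ℕ) (T : Set ℕ) : Prop :=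
  (∀ m ∈ T, 0 < m) ∧
  (∀ m ∈ T, ∀ s ∈ S₀, m + s ∈ T) ∧
  (∀ m ∈ T, ∀ j, 1 ≤ j → j ≤ g → m ≤ bb j → ∀ k, j ≤ k → k ≤ g → m + bb k - bb j ∈ T)

/-- The smallest `𝒞`-collection containing `S`. -/
def genC (S₀ : Set ℕ) (g : ℕ) (bb : ℕ → ℕ) (S : Set ℕ) : Set ℕ :=
  ⋂₀ {T | IsCCollection S₀ g bb T ∧ S ⊆ T}

/-- The `𝒞`-collection generated by `S ⊆ ℤ_{>0}` consists exactly of the numbers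
`k + Σ_{j=1}^r (β̄_{b_j} − β̄_{a_j}) + s` with `r ≥ 0`, `s ∈ S_Γ ∪ {0}`, `k ∈ S` and
`k ≤ β̄_{a₁} < β̄_{b₁} ≤ β̄_{a₂} < β̄_{b₂} ≤ ⋯ < β̄_{b_r}`. -/
theorem genC_description (n g : ℕ) (hn : 2 ≤ n) (hg : 1 ≤ g)
    (bb : ℕ → ℕ)
    (hpos : ∀ j, 1 ≤ j → j ≤ g → 0 < bb j)
    (hmono : ∀ j, 1 ≤ j → j < g → bb j < bb (j + 1))
    (hbig : ∀ j, 1 ≤ j → j < g → 2 * bb j < bb (j + 1))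
    (S₀ : Set ℕ)
    (hS₀ : S₀ = (AddSubmonoid.closure ({n} ∪ bb '' Set.Icc 1 g) : AddSubmonoid ℕ))
    (S : Set ℕ) (hS : ∀ m ∈ S, 0 < m) :
    genC S₀ g bb S =
      {m | ∃ (r : ℕ) (a b : ℕ → ℕ) (k s : ℕ), k ∈ S ∧ s ∈ S₀ ∧
        (∀ j, 1 ≤ j → j ≤ r →
          1 ≤ a j ∧ a j ≤ g ∧ 1 ≤ b j ∧ b j ≤ g ∧ bb (a j) < bb (b j)) ∧
        (1 ≤ r → k ≤ bb (a 1)) ∧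
        (∀ j, 1 ≤ j → j < r → bb (b j) ≤ bb (a (j + 1))) ∧
        m = k + (∑ j ∈ Finset.Icc 1 r, (bb (b j) - bb (a j))) + s} := by
  -- strict monotonicity of bb on [1, g]
  have hsm : ∀ j, j ≤ g → ∀ i, 1 ≤ i → i < j → bb i < bb j := by
    intro j
    induction j with
    | zero => intro _ i _ h; omega
    | succ j ih =>
      intro hjg i hi hij
      have h1j : 1 ≤ j := by omega
      have hb : bb j < bb (j + 1) := hmono j h1j (by omega)
      rcases Nat.eq_or_lt_of_le (Nat.lt_succ_iff.mp hij) with h | h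
      · rw [h]; exact hb
      · exact lt_trans (ih (by omega) i hi h) hb
  have hmle : ∀ i j, 1 ≤ i → i ≤ j → j ≤ g → bb i ≤ bb j := by
    intro i j hi hij hjg
    rcases Nat.eq_or_lt_of_le hij with h | h
    · rw [h]
    · exact le_of_lt (hsm j hjg i hi h)
  have h0 : (0 : ℕ) ∈ S₀ := by rw [hS₀]; exact AddSubmonoid.zero_mem _
  have hadd : ∀ s ∈ S₀, ∀ s' ∈ S₀, s + s' ∈ S₀ := by
    intro s hs s' hs'
    rw [hS₀] at *
    exact add_mem hs hs'
  apply subset_antisymm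
  · -- genC ⊆ RHS : the RHS is a C-collection containing S
    apply Set.sInter_subset_of_mem
    constructor
    · refine ⟨?_, ?_, ?_⟩
      · -- positivity
        rintro m ⟨r, a, b, k, s, hk, hs, hc, hk1, hch, hmeq⟩
        have := hS k hk
        omega
      · -- closure under adding S₀
        rintro m ⟨r, a, b, k, s, hk, hs, hc, hk1, hch, hmeq⟩ s' hs'
        exact ⟨r, a, b, k, s + s', hk, hadd s hs s' hs', hc, hk1, hch, by omega⟩
      · -- the C-collection exchange axiom
        rintro m hm j hj1 hjg hmj k' hjk' hk'g
        rcases Nat.eq_or_lt_of_le hjk' with heq | hlt'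
        · rw [← heq, Nat.add_sub_cancel]; exact hm
        obtain ⟨r, a, b, k₀, s, hk, hs, hc, hk1, hch, hmeq⟩ := hm
        have hbjk : bb j < bb k' := hsm k' hk'g j hj1 hlt'
        -- key : if r ≥ 1 then bb (b r) ≤ bb j
        have hbr : 1 ≤ r → bb (b r) ≤ bb j := by
          intro hr
          by_contra hlt
          push_neg at hlt
          obtain ⟨ha1, hag, hb1, hbg, hab⟩ := hc r hr le_rfl
          have har : a r < b r := by
            by_contra h
            push_neg at h
            exact absurd hab (not_lt.mpr (hmle (b r) (a r) hb1 h hag))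
          have hjbr : j < b r := by
            by_contra h
            push_neg at h
            exact absurd hlt (not_lt.mpr (hmle (b r) j hb1 h hjg))
          have hbig' : 2 * bb (b r - 1) < bb (b r) := by
            have := hbig (b r - 1) (by omega) (by omega)
            have hE : b r - 1 + 1 = b r := by omega
            rwa [hE] at this
          have hle1 : bb (a r) ≤ bb (b r - 1) := hmle (a r) (b r - 1) ha1 (by omega) (by omega)
          have hle2 : bb j ≤ bb (b r - 1) := hmle j (b r - 1) hj1 (by omega) (by omega)
          have hterm : bb (b r) - bb (a r) ≤ ∑ i ∈ Finset.Icc 1 r, (bb (b i) - bb (a i)) :=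
            Finset.single_le_sum (f := fun i => bb (b i) - bb (a i))
              (fun i _ => Nat.zero_le _) (Finset.mem_Icc.mpr ⟨hr, le_rfl⟩)
          have hk0 : 0 < k₀ := hS k₀ hk
          omega
        refine ⟨r + 1, fun i => if i = r + 1 then j else a i,
          fun i => if i = r + 1 then k' else b i, k₀, s, hk, hs, ?_, ?_, ?_, ?_⟩
        · intro i h1 h2
          by_cases hi : i = r + 1
          · subst hi
            beta_reduce
            have e1 : (if r + 1 = r + 1 then j else a (r + 1)) = j := if_pos rfl
            have e2 : (if r + 1 = r + 1 then k' else b (r + 1)) = k' := if_pos rfl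
            rw [e1, e2]
            exact ⟨hj1, hjg, by omega, hk'g, hbjk⟩
          · simp only [if_neg hi]
            exact hc i h1 (by omega)
        · intro _
          by_cases hr : r = 0
          · have h11 : (1 : ℕ) = r + 1 := by omega
            have e1 : (if (1 : ℕ) = r + 1 then j else a 1) = j := if_pos h11
            show k₀ ≤ bb (if (1 : ℕ) = r + 1 then j else a 1)
            rw [e1]
            have hsum0 : ∑ i ∈ Finset.Icc 1 r, (bb (b i) - bb (a i)) = 0 := by
              rw [hr]; simp
            omega
          · have h11 : (1 : ℕ) ≠ r + 1 := by omega
            simp only [if_neg h11]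
            exact hk1 (by omega)
        · intro i h1 h2
          by_cases hi : i = r
          · have hne : i ≠ r + 1 := by omega
            have heq : i + 1 = r + 1 := by omega
            simp only [if_neg hne, if_pos heq]
            rw [hi]
            exact hbr (by omega)
          · have hne : i ≠ r + 1 := by omega
            have hne2 : i + 1 ≠ r + 1 := by omega
            simp only [if_neg hne, if_neg hne2]
            exact hch i h1 (by omega)
        · rw [Finset.sum_Icc_succ_top (by omega : 1 ≤ r + 1)]
          beta_reduce
          have e1 : (if r + 1 = r + 1 then k' else b (r + 1)) = k' := if_pos rfl
          have e2 : (if r + 1 = r + 1 then j else a (r + 1)) = j := if_pos rfl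
          rw [e1, e2]
          have hcongr : ∑ i ∈ Finset.Icc 1 r,
              (bb (if i = r + 1 then k' else b i) - bb (if i = r + 1 then j else a i)) =
              ∑ i ∈ Finset.Icc 1 r, (bb (b i) - bb (a i)) := by
            apply Finset.sum_congr rfl
            intro i hi
            have : i ≠ r + 1 := by
              have := Finset.mem_Icc.mp hi; omega
            simp [this]
          rw [hcongr]
          omega
    · -- S ⊆ RHS
      intro m hm
      refine ⟨0, fun _ => 1, fun _ => 1, m, 0, hm, h0, ?_, ?_, ?_, by simp⟩
      · intro j h1 h2; exact absurd h2 (by omega)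
      · intro h; exact absurd h (by omega)
      · intro j h1 h2; exact absurd h2 (by omega)
  · -- RHS ⊆ genC
    intro m hm
    rw [genC, Set.mem_sInter]
    rintro T ⟨⟨hT1, hT2, hT3⟩, hST⟩
    obtain ⟨r, a, b, k, s, hk, hs, hc, hk1, hch, hmeq⟩ := hm
    have key : ∀ r' : ℕ,
        (∀ j, 1 ≤ j → j ≤ r' → 1 ≤ a j ∧ a j ≤ g ∧ 1 ≤ b j ∧ b j ≤ g ∧ bb (a j) < bb (b j)) →
        (1 ≤ r' → k ≤ bb (a 1)) →
        (∀ j, 1 ≤ j → j < r' → bb (b j) ≤ bb (a (j + 1))) →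
        (k + ∑ j ∈ Finset.Icc 1 r', (bb (b j) - bb (a j)) ∈ T ∧
          (1 ≤ r' → k + ∑ j ∈ Finset.Icc 1 r', (bb (b j) - bb (a j)) ≤ bb (b r'))) := by
      intro r'
      induction r' with
      | zero =>
        intro _ _ _
        simp only [Finset.Icc_eq_empty_of_lt (by omega : (0:ℕ) < 1), Finset.sum_empty,
          Nat.add_zero]
        exact ⟨hST hk, by omega⟩
      | succ r' ih =>
        intro hc' hk1' hch'
        obtain ⟨hmem, hle⟩ := ih (fun j h1 h2 => hc' j h1 (by omega))
          (fun _ => hk1' (by omega)) (fun j h1 h2 => hch' j h1 (by omega))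
        obtain ⟨ha1, hag, hb1, hbg, hab⟩ := hc' (r' + 1) (by omega) le_rfl
        have hab' : a (r' + 1) ≤ b (r' + 1) := by
          by_contra h
          push_neg at h
          exact absurd hab (not_lt.mpr (hmle (b (r' + 1)) (a (r' + 1)) hb1 (le_of_lt h) hag))
        have hMle : k + ∑ j ∈ Finset.Icc 1 r', (bb (b j) - bb (a j)) ≤ bb (a (r' + 1)) := by
          rcases Nat.eq_zero_or_pos r' with h | h
          · subst h
            simpa using hk1' (by omega)
          · exact le_trans (hle h) (hch' r' h (by omega))
        have hnew := hT3 _ hmem (a (r' + 1)) ha1 hag hMle (b (r' + 1)) hab' hbg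
        rw [Finset.sum_Icc_succ_top (by omega : 1 ≤ r' + 1)]
        constructor
        · have heq : k + (∑ j ∈ Finset.Icc 1 r', (bb (b j) - bb (a j)) +
              (bb (b (r' + 1)) - bb (a (r' + 1)))) =
              k + ∑ j ∈ Finset.Icc 1 r', (bb (b j) - bb (a j)) + bb (b (r' + 1)) -
                bb (a (r' + 1)) := by omega
          rw [heq]
          exact hnew
        · intro _
          omega
    obtain ⟨hmem, _⟩ := key r hc hk1 hch
    have := hT2 _ hmem s hs
    rwa [hmeq]
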